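/- Let α be a composition, i an index with α_i ≠ 0, and z ∈ [1, α_i]. If α is (i,z)-removable, then the composition α' covered by α with α'_i = α_i − z is unique; explicitly, α'_{J̃(i,z)} = α_{J̃(i,z)} + z − 1 and α'_m = α_m for all m ∉ {i, J̃(i,z)}, where J̃(i,z) is the greatest j > i with c_{i,j}(α) = c_{i,j}(α̃) and α̃ is obtained from α by replacing α_i with α_i − z. -/
import Mathlib


/-- The matrix `c_{i,j}(α)` defined recursively in `j`. -/
def cmat (α : ℕ → ℕ) (i : ℕ) : ℕ → ℕ
  | 0 => 0
  | j + 1 =>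
    if j + 1 ≤ i + 1 then 0
    else cmat α i j + if α j < α i - cmat α i j then 1 else 0

/-- `α` covers `α'` in position `(i,j)`: conditions (a1)–(a4). -/
def CoversAt (α α' : ℕ → ℕ) (i j : ℕ) : Prop :=
  1 ≤ i ∧ i < j ∧
  α' i + 1 ≤ α i ∧
  α' j + α' i + 1 = α j + α i ∧
  (∀ k, k ≠ i → k ≠ j → α' k = α k) ∧
  cmat α i j = cmat α' i j ∧
  cmat α i j + α j = α' i

/-- `α` is `(i,z)`-removable. -/
def IsRemovable (α : ℕ → ℕ) (i z : ℕ) : Prop :=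
  ∃ α' j, CoversAt α α' i j ∧ α' i + z = α i

/-- `J̃(i,z)`: the greatest `j > i` such that `c_{i,j}(α) = c_{i,j}(α̃)`,
where `α̃` is `α` with `α_i` replaced by `α_i - z`. -/
noncomputable def Jt (α : ℕ → ℕ) (i z : ℕ) : ℕ :=
  sSup {j | i < j ∧ cmat α i j = cmat (Function.update α i (α i - z)) i j}

lemma cmat_succ (α : ℕ → ℕ) (i j : ℕ) (h : i < j) :
    cmat α i (j+1) = cmat α i j + if α j < α i - cmat α i j then 1 else 0 := by
  rw [cmat, if_neg (by omega)]

lemma cmat_zero (α : ℕ → ℕ) (i k : ℕ) (h : k ≤ i + 1) : cmat α i k = 0 := by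
  cases k with
  | zero => rfl
  | succ j => rw [cmat, if_pos h]

lemma cmat_le (α : ℕ → ℕ) (i : ℕ) : ∀ k, cmat α i k ≤ α i := by
  intro k
  induction k with
  | zero => exact Nat.zero_le _
  | succ j ih =>
    rw [cmat]
    split
    · exact Nat.zero_le _
    · split <;> omega

/-- `cmat` only depends on the values of the composition at `i` and
strictly between `i` and `k`. -/
lemma cmat_congr (α β : ℕ → ℕ) (i : ℕ) (hi : α i = β i) :
    ∀ k, (∀ m, i < m → m < k → α m = β m) → cmat α i k = cmat β i k := by
  intro k
  induction k with
  | zero => intro _; rfl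
  | succ j ih =>
    intro h
    by_cases hj : j + 1 ≤ i + 1
    · rw [cmat_zero _ _ _ hj, cmat_zero _ _ _ hj]
    · have hij : i < j := by omega
      have hc := ih (fun m h1 h2 => h m h1 (by omega))
      rw [cmat_succ _ _ _ hij, cmat_succ _ _ _ hij, hc, hi, h j hij (by omega)]

/-- `cmat α̃ i k ≤ cmat α i k ≤ cmat α̃ i k + z` for `α̃` obtained by
decreasing `α i` by `z`. -/
lemma cmat_compare (α : ℕ → ℕ) (i z : ℕ) (hz2 : z ≤ α i) :
    ∀ k, cmat (Function.update α i (α i - z)) i k ≤ cmat α i k ∧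
         cmat α i k ≤ cmat (Function.update α i (α i - z)) i k + z := by
  set β := Function.update α i (α i - z) with hβ
  have hβi : β i = α i - z := Function.update_self _ _ _
  intro k
  induction k with
  | zero => simp [cmat]
  | succ j ih =>
    by_cases hj : j + 1 ≤ i + 1
    · rw [cmat_zero _ _ _ hj, cmat_zero _ _ _ hj]; omega
    · have hij : i < j := by omega
      have hβj : β j = α j := Function.update_of_ne (by omega) _ _
      have h1 := cmat_le α i j
      have h2 := cmat_le β i j
      rw [cmat_succ _ _ _ hij, cmat_succ _ _ _ hij, hβi, hβj]
      rw [hβi] at h2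
      split <;> split <;> omega

/-- The gap `cmat α i k - cmat α̃ i k` is nondecreasing in `k`
(stated additively to avoid natural subtraction). -/
lemma cmat_gap_mono (α : ℕ → ℕ) (i z : ℕ) (hz2 : z ≤ α i) :
    ∀ k k', k ≤ k' →
      cmat (Function.update α i (α i - z)) i k' + cmat α i k ≤
      cmat α i k' + cmat (Function.update α i (α i - z)) i k := by
  set β := Function.update α i (α i - z) with hβ
  have hβi : β i = α i - z := Function.update_self _ _ _
  intro k k' hk
  induction k' with
  | zero =>
    have : k = 0 := by omega
    subst this; omega
  | succ j ih =>
    rcases Nat.lt_or_ge k (j+1) with hlt | hge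
    · have ihj := ih (by omega)
      by_cases hj : j + 1 ≤ i + 1
      · have e1 := cmat_zero α i (j+1) hj
        have e2 := cmat_zero β i (j+1) hj
        have e3 := cmat_zero α i k (by omega)
        have e4 := cmat_zero β i k (by omega)
        omega
      · have hij : i < j := by omega
        have hβj : β j = α j := Function.update_of_ne (by omega) _ _
        have h1 := cmat_le α i j
        have h2 := cmat_le β i j
        have h3 := cmat_compare α i z hz2 j
        rw [← hβ] at h3
        rw [cmat_succ _ _ _ hij, cmat_succ _ _ _ hij, hβi, hβj]
        rw [hβi] at h2
        split <;> split <;> omega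
    · have : k = j + 1 := by omega
      subst this; omega

/-- If `α` covers `α'` in position `(i,j)` with `α'_i = α_i - z`,
then `j = J̃(i,z)`. -/
lemma cover_j_eq (α α' : ℕ → ℕ) (i j z : ℕ) (hz1 : 1 ≤ z) (hz2 : z ≤ α i)
    (hc : CoversAt α α' i j) (hze : α' i + z = α i) : j = Jt α i z := by
  obtain ⟨hi1, hij, hlt, hsum, hoth, hcm, hci⟩ := hc
  set β := Function.update α i (α i - z) with hβ
  have hβi : β i = α i - z := Function.update_self _ _ _
  have hcongr : cmat α' i j = cmat β i j := by
    apply cmat_congr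
    · rw [hβi]; omega
    · intro m h1 h2
      rw [hoth m (by omega) (by omega), hβ, Function.update_of_ne (by omega)]
  have hjS : i < j ∧ cmat α i j = cmat β i j := ⟨hij, by rw [hcm, hcongr]⟩
  have hβj : β j = α j := Function.update_of_ne (by omega) _ _
  have hkey : cmat α i j + α j + z = α i := by omega
  have hstep1 : cmat α i (j+1) = cmat α i j + 1 := by
    rw [cmat_succ _ _ _ hij, if_pos (by omega)]
  have hstep2 : cmat β i (j+1) = cmat α i j := by
    rw [cmat_succ _ _ _ hij, hβi, hβj, ← hjS.2, if_neg (by omega)]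
    omega
  have hub : ∀ k ∈ {j' | i < j' ∧ cmat α i j' = cmat β i j'}, k ≤ j := by
    intro k hk
    by_contra hgt
    have hmono := cmat_gap_mono α i z hz2 (j+1) k (by omega)
    rw [← hβ] at hmono
    have := hk.2
    omega
  have hJ : Jt α i z = sSup {j' | i < j' ∧ cmat α i j' = cmat β i j'} := by
    unfold Jt; rw [← hβ]
  rw [hJ]; symm
  exact le_antisymm (csSup_le ⟨j, hjS⟩ hub) (le_csSup ⟨j, hub⟩ hjS)

/-- if `α` is `(i,z)`-removable, the composition `α'` covered by
`α` with `α'_i = α_i - z` is unique, and it is given explicitly by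
`α'_{J̃(i,z)} = α_{J̃(i,z)} + z - 1` and `α'_m = α_m` for `m ∉ {i, J̃(i,z)}`. -/
theorem removing_unique (α : ℕ → ℕ) (hbd : ∃ m, ∀ k, m < k → α k = 0)
    (i z : ℕ) (hi : 1 ≤ i) (hz1 : 1 ≤ z) (hz2 : z ≤ α i)
    (h : IsRemovable α i z) :
    (∃! α' : ℕ → ℕ, (∃ j, CoversAt α α' i j) ∧ α' i + z = α i) ∧
    (∀ α' : ℕ → ℕ, ((∃ j, CoversAt α α' i j) ∧ α' i + z = α i) →
      α' (Jt α i z) = α (Jt α i z) + z - 1 ∧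
      ∀ m, m ≠ i → m ≠ Jt α i z → α' m = α m) := by
  have desc : ∀ α' : ℕ → ℕ, ((∃ j, CoversAt α α' i j) ∧ α' i + z = α i) →
      α' i = α i - z ∧
      α' (Jt α i z) = α (Jt α i z) + z - 1 ∧
      ∀ m, m ≠ i → m ≠ Jt α i z → α' m = α m := by
    rintro α' ⟨⟨j, hc⟩, hze⟩
    have hjJ : j = Jt α i z := cover_j_eq α α' i j z hz1 hz2 hc hze
    obtain ⟨hi1, hij, hlt, hsum, hoth, hcm, hci⟩ := hc
    refine ⟨by omega, ?_, ?_⟩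
    · rw [← hjJ]; omega
    · intro m hm1 hm2
      exact hoth m hm1 (by rw [hjJ]; exact hm2)
  obtain ⟨α'₀, j₀, hc₀, hz₀⟩ := h
  constructor
  · refine ⟨α'₀, ⟨⟨j₀, hc₀⟩, hz₀⟩, ?_⟩
    intro y hy
    have d1 := desc y hy
    have d2 := desc α'₀ ⟨⟨j₀, hc₀⟩, hz₀⟩
    funext m
    by_cases hmi : m = i
    · rw [hmi, d1.1, d2.1]
    · by_cases hmJ : m = Jt α i z
      · rw [hmJ, d1.2.1, d2.2.1]
      · rw [d1.2.2 m hmi hmJ, d2.2.2 m hmi hmJ]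
  · intro α' h'
    exact (desc α' h').2
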